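/- Coarea inequality for U(1)-signatures: let G be a finite weighted graph with signature s : E^{or} → U(1) and f : V → ℂ with max_u |f(u)| = 1. Then ∫₀¹ [ ι^s(V^f(√t)) + |E(V^f(√t), V^f(√t)^c)| ] dt ≤ (3/2) Σ_{{u,v}∈E} w_{uv} |f(u) - s_{uv} f(v)| (|f(u)| + |f(v)|). -/

import Mathlib

open Finset

/-- Rayleigh quotient of `f` for the magnetic Laplacian with weights `w`,
vertex measure `μ` and signature `s` (each unordered edge counted once). -/
noncomputable def rayleigh {V : Type*} [Fintype V] (G : SimpleGraph V) [DecidableRel G.Adj]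
    (w : V → V → ℝ) (μ : V → ℝ) (s : V → V → ℂ) (f : V → ℂ) : ℝ :=
  ((1 / 2) * ∑ u : V, ∑ v : V, if G.Adj u v then w u v * ‖f u - s u v * f v‖ ^ 2 else 0) /
    (∑ u : V, ‖f u‖ ^ 2 * μ u)

/-- The first eigenvalue of the magnetic Laplacian, characterized by the
variational (min-max) principle as the infimum of Rayleigh quotients. -/
noncomputable def lam1 {V : Type*} [Fintype V] (G : SimpleGraph V) [DecidableRel G.Adj]
    (w : V → V → ℝ) (μ : V → ℝ) (s : V → V → ℂ) : ℝ :=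
  sInf { x : ℝ | ∃ f : V → ℂ, f ≠ 0 ∧ x = rayleigh G w μ s f }

/-- Frustration index of `V1` with `U(1)`-valued switching functions. -/
noncomputable def frusIdx {V : Type*} [Fintype V] (G : SimpleGraph V) [DecidableRel G.Adj]
    (w : V → V → ℝ) (s : V → V → ℂ) (V1 : Finset V) : ℝ :=
  sInf { x : ℝ | ∃ τ : V → ℂ, (∀ u, ‖τ u‖ = 1) ∧
    x = (1 / 2) * ∑ u ∈ V1, ∑ v ∈ V1, if G.Adj u v then w u v * ‖τ u - s u v * τ v‖ else 0 }

/-- Weighted boundary measure `|E(V1, V1ᶜ)|`. -/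
noncomputable def bdry {V : Type*} [Fintype V] [DecidableEq V] (G : SimpleGraph V)
    [DecidableRel G.Adj] (w : V → V → ℝ) (V1 : Finset V) : ℝ :=
  ∑ u ∈ V1, ∑ v ∈ V1ᶜ, if G.Adj u v then w u v else 0

/-- `μ`-volume of `V1`. -/
noncomputable def vol {V : Type*} [Fintype V] (μ : V → ℝ) (V1 : Finset V) : ℝ :=
  ∑ u ∈ V1, μ u

/-- The Cheeger constant `h₁ˢ(μ)`. -/
noncomputable def cheeger1 {V : Type*} [Fintype V] [DecidableEq V] (G : SimpleGraph V)
    [DecidableRel G.Adj] (w : V → V → ℝ) (μ : V → ℝ) (s : V → V → ℂ) : ℝ :=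
  sInf { x : ℝ | ∃ V1 : Finset V, V1.Nonempty ∧
    x = (frusIdx G w s V1 + bdry G w V1) / vol μ V1 }

/-- Maximal `μ`-degree `d_μ`. -/
noncomputable def dmu {V : Type*} [Fintype V] (G : SimpleGraph V) [DecidableRel G.Adj]
    (w : V → V → ℝ) (μ : V → ℝ) : ℝ :=
  ⨆ u : V, (∑ v : V, if G.Adj u v then w u v else 0) / μ u

open MeasureTheory

section aux

lemma aux_core (a b τa τb : ℂ) (hτa : a ≠ 0 → τa = (‖a‖:ℂ)⁻¹ * a)
    (hτb : b ≠ 0 → τb = (‖b‖:ℂ)⁻¹ * b) :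
    ‖τa - τb‖ * min (‖a‖^2) (‖b‖^2) + |‖a‖^2 - ‖b‖^2| ≤ (3/2) * (‖a - b‖ * (‖a‖ + ‖b‖)) := by
  by_cases ha : a = 0
  · subst ha
    simp only [norm_zero, zero_sub, norm_neg]
    rw [zero_pow two_ne_zero, min_eq_left (sq_nonneg _), mul_zero, zero_add, zero_sub,
      abs_neg, abs_of_nonneg (sq_nonneg _), zero_add]
    nlinarith [norm_nonneg b, sq_nonneg ‖b‖]
  by_cases hb : b = 0
  · subst hb
    simp only [norm_zero, sub_zero]
    rw [zero_pow two_ne_zero, min_eq_right (sq_nonneg _), mul_zero, zero_add, sub_zero,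
      abs_of_nonneg (sq_nonneg _), add_zero]
    nlinarith [norm_nonneg a, sq_nonneg ‖a‖]
  -- main case
  have hr : 0 < ‖a‖ := norm_pos_iff.mpr ha
  have hR : 0 < ‖b‖ := norm_pos_iff.mpr hb
  set r := ‖a‖ with hrdef
  set R := ‖b‖ with hRdef
  set D := ‖a - b‖ with hDdef
  have hD : 0 ≤ D := norm_nonneg _
  set T := ‖τa - τb‖ with hTdef
  have hT : 0 ≤ T := norm_nonneg _
  set E := ‖(R:ℂ) * a - (r:ℂ) * b‖ with hEdef
  have hE : E = T * (r * R) := by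
    have h1 : (R:ℂ) * a - (r:ℂ) * b = ((r:ℂ) * R) * (τa - τb) := by
      rw [hτa ha, hτb hb]
      have hr' : (r:ℂ) ≠ 0 := by exact_mod_cast hr.ne'
      have hR' : (R:ℂ) ≠ 0 := by exact_mod_cast hR.ne'
      field_simp
    rw [hEdef, h1, norm_mul, norm_mul, Complex.norm_real, Complex.norm_real,
      Real.norm_eq_abs, Real.norm_eq_abs, abs_of_pos hr, abs_of_pos hR]
    ring
  have hnormsub : ∀ z w : ℂ, ‖z - w‖^2 = ‖z‖^2 + ‖w‖^2 - 2 * (z * starRingEnd ℂ w).re := by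
    intro z w
    rw [Complex.sq_norm, Complex.normSq_sub, ← Complex.sq_norm,
      ← Complex.sq_norm]
  have hE2 : E^2 ≤ (r * R) * D^2 := by
    have h2 : E^2 = R^2 * r^2 + r^2 * R^2 - 2 * (r * R) * (a * starRingEnd ℂ b).re := by
      rw [hEdef, hnormsub, norm_mul, norm_mul, Complex.norm_real, Complex.norm_real,
        Real.norm_eq_abs, Real.norm_eq_abs, abs_of_pos hr, abs_of_pos hR]
      have h4 : ((R:ℂ) * a * starRingEnd ℂ ((r:ℂ) * b)).re
          = r * R * (a * starRingEnd ℂ b).re := by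
        rw [map_mul, Complex.conj_ofReal]
        have h5 : (R:ℂ) * a * ((r:ℂ) * starRingEnd ℂ b)
            = ((r*R : ℝ):ℂ) * (a * starRingEnd ℂ b) := by push_cast; ring
        rw [h5, Complex.re_ofReal_mul]
      rw [h4]; ring
    have h3 : D^2 = r^2 + R^2 - 2 * (a * starRingEnd ℂ b).re := by
      rw [hDdef, hnormsub]
    rw [h2, h3]
    nlinarith [mul_nonneg (mul_nonneg hr.le hR.le) (sq_nonneg (r - R))]
  have hE2' : (T * (r * R))^2 ≤ (r * R) * D^2 := hE ▸ hE2
  rcases le_total r R with hrR | hrR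
  · have hmin : min (r^2) (R^2) = r^2 := min_eq_left (by nlinarith)
    have habs : |r^2 - R^2| = R^2 - r^2 := by rw [abs_of_nonpos (by nlinarith)]; ring
    have hTr : T * r ≤ D := by
      have hsq : (T * r)^2 ≤ D^2 := by
        nlinarith [hE2', mul_pos hr hR,
          mul_nonneg (mul_nonneg (sq_nonneg T) (mul_nonneg (mul_nonneg hr.le hr.le) hR.le))
            (sub_nonneg.2 hrR)]
      have h6 := Real.sqrt_le_sqrt hsq
      rwa [Real.sqrt_sq (by positivity), Real.sqrt_sq hD] at h6
    have hsub : R - r ≤ D := by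
      have h7 := abs_norm_sub_norm_le a b
      rw [← hrdef, ← hRdef, ← hDdef] at h7
      have h8 := abs_le.mp h7
      linarith [h8.1, h8.2]
    rw [hmin, habs]
    nlinarith [mul_le_mul_of_nonneg_right hTr hr.le,
      mul_le_mul_of_nonneg_right hsub (by positivity : (0:ℝ) ≤ R + r),
      mul_nonneg hD (sub_nonneg.2 hrR)]
  · have hmin : min (r^2) (R^2) = R^2 := min_eq_right (by nlinarith)
    have habs : |r^2 - R^2| = r^2 - R^2 := abs_of_nonneg (by nlinarith)
    have hTR : T * R ≤ D := by
      have hsq : (T * R)^2 ≤ D^2 := by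
        nlinarith [hE2', mul_pos hr hR,
          mul_nonneg (mul_nonneg (sq_nonneg T) (mul_nonneg (mul_nonneg hR.le hR.le) hr.le))
            (sub_nonneg.2 hrR)]
      have h6 := Real.sqrt_le_sqrt hsq
      rwa [Real.sqrt_sq (by positivity), Real.sqrt_sq hD] at h6
    have hsub : r - R ≤ D := by
      have h7 := abs_norm_sub_norm_le a b
      rw [← hrdef, ← hRdef, ← hDdef] at h7
      have h8 := abs_le.mp h7
      linarith [h8.1, h8.2]
    rw [hmin, habs]
    nlinarith [mul_le_mul_of_nonneg_right hTR hR.le,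
      mul_le_mul_of_nonneg_right hsub (by positivity : (0:ℝ) ≤ r + R),
      mul_nonneg hD (sub_nonneg.2 hrR)]

lemma aux_intg (q : ℝ) (s : Set ℝ) (hs : MeasurableSet s) :
    IntervalIntegrable (fun t => q * s.indicator (fun _ => (1:ℝ)) t) volume 0 1 := by
  rw [intervalIntegrable_iff_integrableOn_Ioc_of_le (by norm_num)]
  have h : IntegrableOn (fun _ : ℝ => q) (Set.Ioc (0:ℝ) 1) volume :=
    integrableOn_const measure_Ioc_lt_top.ne
  have h2 := (h.indicator hs)
  apply h2.congr_fun ?_ (measurableSet_Ioc)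
  intro x _
  by_cases hx : x ∈ s <;> simp [hx]

lemma aux_int_Iic (q c : ℝ) (h0 : 0 ≤ c) (h1 : c ≤ 1) :
    ∫ t in (0:ℝ)..1, q * (Set.Iic c).indicator (fun _ => (1:ℝ)) t = q * c := by
  rw [intervalIntegral.integral_const_mul,
    intervalIntegral.integral_of_le (by norm_num : (0:ℝ) ≤ 1),
    setIntegral_indicator measurableSet_Iic]
  have h2 : Set.Ioc (0:ℝ) 1 ∩ Set.Iic c = Set.Ioc 0 c := by
    rw [Set.Ioc_inter_Iic, min_eq_right h1]
  rw [h2]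
  simp [Real.volume_Ioc, ENNReal.toReal_ofReal h0, h0]

lemma aux_int_Ioc (q d e : ℝ) (hd : 0 ≤ d) (he : e ≤ 1) :
    ∫ t in (0:ℝ)..1, q * (Set.Ioc d e).indicator (fun _ => (1:ℝ)) t = q * max (e - d) 0 := by
  rw [intervalIntegral.integral_const_mul,
    intervalIntegral.integral_of_le (by norm_num : (0:ℝ) ≤ 1),
    setIntegral_indicator measurableSet_Ioc]
  have h2 : Set.Ioc (0:ℝ) 1 ∩ Set.Ioc d e = Set.Ioc d e := by
    rw [Set.Ioc_inter_Ioc, max_eq_right hd, min_eq_right he]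
  rw [h2]
  rcases le_total e d with h | h
  · simp [Set.Ioc_eq_empty_of_le h, max_eq_right (by linarith : e - d ≤ 0)]
  · simp [Real.volume_Ioc, ENNReal.toReal_ofReal (by linarith : (0:ℝ) ≤ e - d),
      max_eq_left (by linarith : (0:ℝ) ≤ e - d), mul_comm]

lemma aux_frus {V : Type*} [Fintype V] (G : SimpleGraph V) [DecidableRel G.Adj]
    (w : V → V → ℝ) (s : V → V → ℂ)
    (hw_pos : ∀ u v, G.Adj u v → 0 < w u v) (V1 : Finset V)
    (τ : V → ℂ) (hτ : ∀ u, ‖τ u‖ = 1) :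
    frusIdx G w s V1 ≤
      (1 / 2) * ∑ u ∈ V1, ∑ v ∈ V1, if G.Adj u v then w u v * ‖τ u - s u v * τ v‖ else 0 := by
  apply csInf_le
  · refine ⟨0, fun x hx => ?_⟩
    obtain ⟨τ', _, rfl⟩ := hx
    apply mul_nonneg (by norm_num)
    refine Finset.sum_nonneg fun u _ => Finset.sum_nonneg fun v _ => ?_
    split_ifs with h
    · exact mul_nonneg (hw_pos u v h).le (norm_nonneg _)
    · exact le_refl 0
  · exact ⟨τ, hτ, rfl⟩

end aux

open scoped Classical

theorem stmt_12 {V : Type*} [Fintype V] [DecidableEq V] (G : SimpleGraph V) [DecidableRel G.Adj]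
    (w : V → V → ℝ) (s : V → V → ℂ)
    (hw_sym : ∀ u v, w u v = w v u)
    (hw_pos : ∀ u v, G.Adj u v → 0 < w u v)
    (hs_unit : ∀ u v, G.Adj u v → ‖s u v‖ = 1)
    (hs_inv : ∀ u v, G.Adj u v → s v u = (s u v)⁻¹)
    (f : V → ℂ) (hle : ∀ u, ‖f u‖ ≤ 1) (hmax : ∃ u, ‖f u‖ = 1) :
    (∫ t in (0:ℝ)..1,
        (frusIdx G w s (Finset.univ.filter fun u => Real.sqrt t ≤ ‖f u‖) +
          bdry G w (Finset.univ.filter fun u => Real.sqrt t ≤ ‖f u‖))) ≤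
      (3 / 2) * ((1 / 2) * ∑ u : V, ∑ v : V,
        if G.Adj u v then w u v * ‖f u - s u v * f v‖ * (‖f u‖ + ‖f v‖) else 0) := by
  classical
  set c : V → ℝ := fun u => ‖f u‖ ^ 2 with hcdef
  have hc0 : ∀ u, 0 ≤ c u := fun u => sq_nonneg _
  have hc1 : ∀ u, c u ≤ 1 := fun u => by
    have h := hle u
    have := pow_le_one₀ (norm_nonneg (f u)) h (n := 2)
    simpa [hcdef] using this
  set τ : V → ℂ := fun u => if f u = 0 then 1 else (‖f u‖:ℂ)⁻¹ * f u with hτdef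
  have hτ1 : ∀ u, ‖τ u‖ = 1 := by
    intro u; by_cases h : f u = 0
    · simp [hτdef, h]
    · have hn : ‖f u‖ ≠ 0 := norm_ne_zero_iff.mpr h
      simp only [hτdef, if_neg h, norm_mul, norm_inv, Complex.norm_real, Real.norm_eq_abs,
        abs_of_nonneg (norm_nonneg (f u))]
      exact inv_mul_cancel₀ hn
  set A : V → V → ℝ := fun u v => if G.Adj u v then w u v * ‖τ u - s u v * τ v‖ else 0 with hAdef
  set W : V → V → ℝ := fun u v => if G.Adj u v then w u v else 0 with hWdef
  have hA0 : ∀ u v, 0 ≤ A u v := fun u v => by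
    simp only [hAdef]; split_ifs with h
    exacts [mul_nonneg (hw_pos u v h).le (norm_nonneg _), le_refl 0]
  have hW0 : ∀ u v, 0 ≤ W u v := fun u v => by
    simp only [hWdef]; split_ifs with h
    exacts [(hw_pos u v h).le, le_refl 0]
  have hWsym : ∀ u v, W u v = W v u := fun u v => by
    simp only [hWdef]; by_cases h : G.Adj u v
    · rw [if_pos h, if_pos h.symm, hw_sym]
    · rw [if_neg h, if_neg (fun h' => h h'.symm)]
  set F : ℝ → ℝ := fun t => ∑ u : V, ∑ v : V,
      ((1/2) * A u v * (Set.Iic (min (c u) (c v))).indicator (fun _ => (1:ℝ)) t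
        + W u v * (Set.Ioc (c v) (c u)).indicator (fun _ => (1:ℝ)) t) with hFdef
  have hbody : ∀ u v : V, IntervalIntegrable (fun t =>
      (1/2) * A u v * (Set.Iic (min (c u) (c v))).indicator (fun _ => (1:ℝ)) t
        + W u v * (Set.Ioc (c v) (c u)).indicator (fun _ => (1:ℝ)) t) volume 0 1 :=
    fun u v => (aux_intg _ _ measurableSet_Iic).add (aux_intg _ _ measurableSet_Ioc)
  have hinner : ∀ u : V, IntervalIntegrable (fun t => ∑ v : V,
      ((1/2) * A u v * (Set.Iic (min (c u) (c v))).indicator (fun _ => (1:ℝ)) t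
        + W u v * (Set.Ioc (c v) (c u)).indicator (fun _ => (1:ℝ)) t)) volume 0 1 := by
    intro u
    have heq : (fun t => ∑ v : V,
        ((1/2) * A u v * (Set.Iic (min (c u) (c v))).indicator (fun _ => (1:ℝ)) t
          + W u v * (Set.Ioc (c v) (c u)).indicator (fun _ => (1:ℝ)) t))
        = ∑ v : V, (fun t =>
        (1/2) * A u v * (Set.Iic (min (c u) (c v))).indicator (fun _ => (1:ℝ)) t
          + W u v * (Set.Ioc (c v) (c u)).indicator (fun _ => (1:ℝ)) t) := by
      funext t; rw [Finset.sum_apply]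
    rw [heq]
    exact IntervalIntegrable.sum Finset.univ (fun v _ => hbody u v)
  have hFint : IntervalIntegrable F volume 0 1 := by
    have heq : F = ∑ u : V, (fun t => ∑ v : V,
        ((1/2) * A u v * (Set.Iic (min (c u) (c v))).indicator (fun _ => (1:ℝ)) t
          + W u v * (Set.Ioc (c v) (c u)).indicator (fun _ => (1:ℝ)) t)) := by
      funext t; rw [Finset.sum_apply]
    rw [heq]
    exact IntervalIntegrable.sum Finset.univ (fun u _ => hinner u)
  have hiff : ∀ t : ℝ, 0 ≤ t → ∀ u, (Real.sqrt t ≤ ‖f u‖ ↔ t ≤ c u) := by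
    intro t ht u
    constructor
    · intro h
      calc t = Real.sqrt t ^ 2 := (Real.sq_sqrt ht).symm
        _ ≤ ‖f u‖ ^ 2 := by apply pow_le_pow_left₀ (Real.sqrt_nonneg t) h
    · intro h
      have := Real.sqrt_le_sqrt h
      rwa [show Real.sqrt (c u) = ‖f u‖ from by rw [hcdef]; exact Real.sqrt_sq (norm_nonneg _)]
        at this
  have hVt : ∀ t : ℝ, 0 ≤ t →
      (Finset.univ.filter fun u => Real.sqrt t ≤ ‖f u‖)
        = (Finset.univ.filter fun u => t ≤ c u) := by
    intro t ht; ext u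
    simp only [Finset.mem_filter, Finset.mem_univ, true_and]
    exact hiff t ht u
  have hgle : ∀ t ∈ Set.Icc (0:ℝ) 1,
      (frusIdx G w s (Finset.univ.filter fun u => Real.sqrt t ≤ ‖f u‖) +
        bdry G w (Finset.univ.filter fun u => Real.sqrt t ≤ ‖f u‖)) ≤ F t := by
    intro t ht
    rw [hVt t ht.1]
    have h1 := aux_frus G w s hw_pos (Finset.univ.filter fun u => t ≤ c u) τ hτ1
    have hsum1 : ∑ u ∈ (Finset.univ.filter fun u => t ≤ c u),
        ∑ v ∈ (Finset.univ.filter fun u => t ≤ c u),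
          (if G.Adj u v then w u v * ‖τ u - s u v * τ v‖ else 0)
        = ∑ u : V, ∑ v : V, A u v * (Set.Iic (min (c u) (c v))).indicator (fun _ => (1:ℝ)) t := by
      rw [Finset.sum_filter]
      refine Finset.sum_congr rfl fun u _ => ?_
      by_cases hu : t ≤ c u
      · rw [if_pos hu, Finset.sum_filter]
        refine Finset.sum_congr rfl fun v _ => ?_
        by_cases hv : t ≤ c v
        · rw [if_pos hv, Set.indicator_of_mem (by simpa [Set.mem_Iic] using le_min hu hv),
            mul_one]
        · rw [if_neg hv,
            Set.indicator_of_notMem (by simp [Set.mem_Iic, le_min_iff, hv]), mul_zero]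
      · rw [if_neg hu]
        symm; apply Finset.sum_eq_zero; intro v _
        rw [Set.indicator_of_notMem
          (fun hmem => hu (le_trans (Set.mem_Iic.mp hmem) (min_le_left _ _))), mul_zero]
    have hsum2 : bdry G w (Finset.univ.filter fun u => t ≤ c u)
        = ∑ u : V, ∑ v : V, W u v * (Set.Ioc (c v) (c u)).indicator (fun _ => (1:ℝ)) t := by
      simp only [bdry]
      rw [show (Finset.univ.filter fun u => t ≤ c u)ᶜ
          = Finset.univ.filter (fun u => ¬ t ≤ c u) from by ext u; simp]
      rw [Finset.sum_filter]
      refine Finset.sum_congr rfl fun u _ => ?_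
      by_cases hu : t ≤ c u
      · rw [if_pos hu, Finset.sum_filter]
        refine Finset.sum_congr rfl fun v _ => ?_
        by_cases hv : t ≤ c v
        · rw [if_neg (not_not_intro hv),
            Set.indicator_of_notMem (fun hmem => (not_lt.mpr hv) (Set.mem_Ioc.mp hmem).1),
            mul_zero]
        · rw [if_pos hv, Set.indicator_of_mem (Set.mem_Ioc.mpr ⟨not_le.mp hv, hu⟩), mul_one]
      · rw [if_neg hu]
        symm; apply Finset.sum_eq_zero; intro v _
        rw [Set.indicator_of_notMem (fun hmem => hu (Set.mem_Ioc.mp hmem).2), mul_zero]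
    calc frusIdx G w s (Finset.univ.filter fun u => t ≤ c u)
          + bdry G w (Finset.univ.filter fun u => t ≤ c u)
        ≤ (1 / 2) * (∑ u ∈ (Finset.univ.filter fun u => t ≤ c u),
            ∑ v ∈ (Finset.univ.filter fun u => t ≤ c u),
              (if G.Adj u v then w u v * ‖τ u - s u v * τ v‖ else 0))
          + bdry G w (Finset.univ.filter fun u => t ≤ c u) := add_le_add_left h1 _
      _ = (1 / 2) * (∑ u : V, ∑ v : V,
            A u v * (Set.Iic (min (c u) (c v))).indicator (fun _ => (1:ℝ)) t)
          + ∑ u : V, ∑ v : V, W u v * (Set.Ioc (c v) (c u)).indicator (fun _ => (1:ℝ)) t := by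
          rw [hsum1, hsum2]
      _ = F t := by
          simp only [hFdef, Finset.mul_sum, Finset.sum_add_distrib, ← mul_assoc]
  -- now split on integrability of the LHS integrand
  by_cases hgint : IntervalIntegrable (fun t =>
      frusIdx G w s (Finset.univ.filter fun u => Real.sqrt t ≤ ‖f u‖) +
        bdry G w (Finset.univ.filter fun u => Real.sqrt t ≤ ‖f u‖)) volume 0 1
  swap
  · rw [intervalIntegral.integral_undef hgint]
    apply mul_nonneg (by norm_num)
    apply mul_nonneg (by norm_num)
    refine Finset.sum_nonneg fun u _ => Finset.sum_nonneg fun v _ => ?_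
    split_ifs with h
    · exact mul_nonneg (mul_nonneg (hw_pos u v h).le (norm_nonneg _)) (by positivity)
    · exact le_refl 0
  have hmono := intervalIntegral.integral_mono_on (by norm_num : (0:ℝ) ≤ 1) hgint hFint hgle
  refine le_trans hmono ?_
  have hFval : ∫ t in (0:ℝ)..1, F t
      = ∑ u : V, ∑ v : V, ((1/2) * A u v * min (c u) (c v) + W u v * max (c u - c v) 0) := by
    simp only [hFdef]
    rw [intervalIntegral.integral_finset_sum (fun u _ => hinner u)]
    refine Finset.sum_congr rfl fun u _ => ?_
    rw [intervalIntegral.integral_finset_sum (fun v _ => hbody u v)]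
    refine Finset.sum_congr rfl fun v _ => ?_
    rw [intervalIntegral.integral_add (aux_intg _ _ measurableSet_Iic)
        (aux_intg _ _ measurableSet_Ioc),
      aux_int_Iic _ _ (le_min (hc0 u) (hc0 v)) (le_trans (min_le_left _ _) (hc1 u)),
      aux_int_Ioc _ _ _ (hc0 v) (hc1 u)]
  rw [hFval]
  clear hmono hgle hgint hFval hFint hinner hbody
  -- antisymmetrize the boundary part
  have hswap : ∑ u : V, ∑ v : V, W u v * max (c u - c v) 0
      = ∑ u : V, ∑ v : V, W u v * max (c v - c u) 0 := by
    rw [Finset.sum_comm]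
    exact Finset.sum_congr rfl fun u _ => Finset.sum_congr rfl fun v _ => by rw [hWsym u v]
  have hkey : ∀ wt x : ℝ, wt * max x 0 + wt * max (-x) 0 = wt * |x| := by
    intro wt x; rcases le_total 0 x with h | h
    · rw [max_eq_left h, max_eq_right (neg_nonpos.mpr h), abs_of_nonneg h]; ring
    · rw [max_eq_right h, max_eq_left (neg_nonneg.mpr h), abs_of_nonpos h]; ring
  have hanti : ∑ u : V, ∑ v : V, W u v * max (c u - c v) 0
      = (1/2) * ∑ u : V, ∑ v : V, W u v * |c u - c v| := by
    have h2 : (∑ u : V, ∑ v : V, W u v * max (c u - c v) 0) * 2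
        = ∑ u : V, ∑ v : V, W u v * |c u - c v| := by
      calc (∑ u : V, ∑ v : V, W u v * max (c u - c v) 0) * 2
          = (∑ u : V, ∑ v : V, W u v * max (c u - c v) 0)
            + (∑ u : V, ∑ v : V, W u v * max (c v - c u) 0) := by rw [← hswap]; ring
        _ = ∑ u : V, ∑ v : V,
            (W u v * max (c u - c v) 0 + W u v * max (c v - c u) 0) := by
            simp only [← Finset.sum_add_distrib]
        _ = ∑ u : V, ∑ v : V, W u v * |c u - c v| := by
            refine Finset.sum_congr rfl fun u _ => Finset.sum_congr rfl fun v _ => ?_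
            rw [show c v - c u = -(c u - c v) by ring, hkey]
    linarith
  -- per-pair comparison
  have hpp : ∀ u v : V, (1/2) * A u v * min (c u) (c v) + (1/2) * (W u v * |c u - c v|)
      ≤ (3/4) * (if G.Adj u v then w u v * ‖f u - s u v * f v‖ * (‖f u‖ + ‖f v‖) else 0) := by
    intro u v
    by_cases h : G.Adj u v
    · simp only [hAdef, hWdef, if_pos h]
      have hb : ‖s u v * f v‖ = ‖f v‖ := by rw [norm_mul, hs_unit u v h, one_mul]
      have hcore := aux_core (f u) (s u v * f v) (τ u) (s u v * τ v)
        (fun h' => by simp only [hτdef, if_neg h'])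
        (by
          intro h'
          have hfv : f v ≠ 0 := fun h'' => h' (by rw [h'', mul_zero])
          simp only [hτdef, if_neg hfv, hb]
          ring)
      rw [hb] at hcore
      have hwnn := (hw_pos u v h).le
      have hmul := mul_le_mul_of_nonneg_left hcore hwnn
      simp only [hcdef]
      nlinarith [hmul]
    · simp only [hAdef, hWdef, if_neg h]
      norm_num
  calc ∑ u : V, ∑ v : V, ((1/2) * A u v * min (c u) (c v) + W u v * max (c u - c v) 0)
      = ∑ u : V, ∑ v : V, (1/2) * A u v * min (c u) (c v)
        + ∑ u : V, ∑ v : V, W u v * max (c u - c v) 0 := by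
        simp only [Finset.sum_add_distrib]
    _ = ∑ u : V, ∑ v : V, (1/2) * A u v * min (c u) (c v)
        + (1/2) * ∑ u : V, ∑ v : V, W u v * |c u - c v| := by rw [hanti]
    _ = ∑ u : V, ∑ v : V,
          ((1/2) * A u v * min (c u) (c v) + (1/2) * (W u v * |c u - c v|)) := by
        simp only [Finset.mul_sum, Finset.sum_add_distrib]
    _ ≤ ∑ u : V, ∑ v : V, (3/4) * (if G.Adj u v then
          w u v * ‖f u - s u v * f v‖ * (‖f u‖ + ‖f v‖) else 0) :=
        Finset.sum_le_sum fun u _ => Finset.sum_le_sum fun v _ => hpp u v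
    _ = (3/2) * ((1/2) * ∑ u : V, ∑ v : V,
          (if G.Adj u v then w u v * ‖f u - s u v * f v‖ * (‖f u‖ + ‖f v‖) else 0)) := by
        simp only [← Finset.mul_sum]; ring
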